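/- The function k(x,x') = |x| + |x'| − |x − x'| on ℝ × ℝ is a positive semidefinite kernel: for all n, all x_1,...,x_n ∈ ℝ and all c_1,...,c_n ∈ ℝ, Σ_{i,j} c_i c_j k(x_i, x_j) ≥ 0. -/

import Mathlib

open MeasureTheory Set

lemma dk_ind_mul (a b : ℝ) (t : ℝ) :
    (Set.uIoc 0 a).indicator (1:ℝ→ℝ) t * (Set.uIoc 0 b).indicator 1 t
      = (Set.uIoc 0 a ∩ Set.uIoc 0 b).indicator 1 t := by
  by_cases h1 : t ∈ Set.uIoc 0 a <;> by_cases h2 : t ∈ Set.uIoc 0 b <;>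
    simp [Set.indicator, h1, h2]

lemma dk_integral (a b : ℝ) :
    ∫ t, (Set.uIoc 0 a).indicator (1:ℝ→ℝ) t * (Set.uIoc 0 b).indicator 1 t
      = (volume (Set.uIoc 0 a ∩ Set.uIoc 0 b)).toReal := by
  simp_rw [dk_ind_mul]
  rw [integral_indicator (measurableSet_uIoc.inter measurableSet_uIoc)]
  simp
  rfl

lemma dk_vol (a b : ℝ) :
    (volume (Set.uIoc 0 a ∩ Set.uIoc 0 b)).toReal
      = max 0 (min (max 0 a) (max 0 b) - max (min 0 a) (min 0 b)) := by
  rw [Set.uIoc, Set.uIoc, Set.Ioc_inter_Ioc, Real.volume_Ioc, ENNReal.toReal_ofReal']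
  rw [max_comm]

lemma dk_key (a b : ℝ) :
    |a| + |b| - |a - b|
      = 2 * ∫ t, (Set.uIoc 0 a).indicator (1:ℝ→ℝ) t * (Set.uIoc 0 b).indicator 1 t := by
  rw [dk_integral, dk_vol]
  rcases abs_cases a with ⟨h1,h1'⟩|⟨h1,h1'⟩ <;>
  rcases abs_cases b with ⟨h2,h2'⟩|⟨h2,h2'⟩ <;>
  rcases abs_cases (a-b) with ⟨h3,h3'⟩|⟨h3,h3'⟩ <;>
  rw [h1,h2,h3] <;>
  simp only [min_def, max_def] <;> split_ifs <;> linarith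

lemma dk_integrable (a b c1 c2 : ℝ) :
    Integrable (fun t => (c1 * (Set.uIoc 0 a).indicator (1:ℝ→ℝ) t)
      * (c2 * (Set.uIoc 0 b).indicator 1 t)) := by
  have h : (fun t => (c1 * (Set.uIoc 0 a).indicator (1:ℝ→ℝ) t)
      * (c2 * (Set.uIoc 0 b).indicator 1 t))
      = fun t => (c1 * c2) * (Set.uIoc 0 a ∩ Set.uIoc 0 b).indicator 1 t := by
    funext t; rw [show (c1 * (Set.uIoc 0 a).indicator (1:ℝ→ℝ) t)
      * (c2 * (Set.uIoc 0 b).indicator 1 t)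
      = (c1*c2) * ((Set.uIoc 0 a).indicator (1:ℝ→ℝ) t * (Set.uIoc 0 b).indicator 1 t) by ring,
      dk_ind_mul]
  rw [h]
  refine Integrable.const_mul ?_ _
  rw [integrable_indicator_iff (measurableSet_uIoc.inter measurableSet_uIoc)]
  refine integrableOn_const ?_ (by simp)
  rw [← lt_top_iff_ne_top]
  refine lt_of_le_of_lt (measure_mono Set.inter_subset_left) ?_
  rw [Set.uIoc, Real.volume_Ioc]
  exact ENNReal.ofReal_lt_top

/-- The distance-induced kernel `k(x,x') = |x| + |x'| − |x − x'|` on `ℝ` is positive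
semidefinite. -/
theorem distance_kernel_posSemidef (n : ℕ) (x : Fin n → ℝ) (c : Fin n → ℝ) :
    0 ≤ ∑ i, ∑ j, c i * c j * (|x i| + |x j| - |x i - x j|) := by
  set g : Fin n → ℝ → ℝ := fun i => (Set.uIoc 0 (x i)).indicator 1 with hg
  have step : ∀ i j : Fin n, c i * c j * (|x i| + |x j| - |x i - x j|)
      = 2 * ∫ t, (c i * g i t) * (c j * g j t) := by
    intro i j
    rw [dk_key (x i) (x j)]
    rw [show (fun t => (c i * g i t) * (c j * g j t))
      = fun t => (c i * c j) * ((Set.uIoc 0 (x i)).indicator (1:ℝ→ℝ) t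
          * (Set.uIoc 0 (x j)).indicator 1 t) from funext fun t => by simp [hg]; ring]
    rw [integral_const_mul]; ring
  simp_rw [step, ← Finset.mul_sum]
  have h1 : ∀ i : Fin n, ∑ j, ∫ t, (c i * g i t) * (c j * g j t)
      = ∫ t, ∑ j, (c i * g i t) * (c j * g j t) :=
    fun i => (integral_finset_sum _ fun j _ => dk_integrable (x i) (x j) (c i) (c j)).symm
  simp_rw [h1]
  rw [show (∑ i, ∫ t, ∑ j, (c i * g i t) * (c j * g j t))
      = ∫ t, ∑ i, ∑ j, (c i * g i t) * (c j * g j t) from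
    (integral_finset_sum _ fun i _ => integrable_finset_sum _
      fun j _ => dk_integrable (x i) (x j) (c i) (c j)).symm]
  have h2 : ∀ t, ∑ i, ∑ j, (c i * g i t) * (c j * g j t)
      = (∑ i, c i * g i t) ^ 2 := by
    intro t
    rw [sq, Finset.sum_mul_sum]
  simp_rw [h2]
  positivity
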